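/- For n ≥ 3 and g(x) = -x + x^{(n+2)/(n-2)}, the function Δ(x) = (x-1)·[g'(x)·g''(1) - g'(1)·g''(x)] is nonnegative for all x > 0. -/

import Mathlib

theorem chow_wang_delta_nonneg_for_yamabe_nonlinearity
    (n : ℕ) (hn : 3 ≤ n)
    (g : ℝ → ℝ)
    (hg : ∀ x : ℝ, g x = -x + x ^ (((n : ℝ) + 2) / ((n : ℝ) - 2)))
    (Δ : ℝ → ℝ)
    (hΔ : ∀ x, Δ x = (x - 1) * (deriv g x * deriv (deriv g) 1 - deriv g 1 * deriv (deriv g) x)) :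
    ∀ x : ℝ, 0 < x → 0 ≤ Δ x := by
  set p : ℝ := ((n : ℝ) + 2) / ((n : ℝ) - 2) with hpdef
  have hn' : (3 : ℝ) ≤ (n : ℝ) := by exact_mod_cast hn
  have h2 : (0 : ℝ) < (n : ℝ) - 2 := by linarith
  have hp : 1 < p := by
    rw [hpdef, lt_div_iff₀ h2]; linarith
  have hgf : g = fun y : ℝ => -y + y ^ p := funext hg
  have hdg : deriv g = fun y : ℝ => -1 + p * y ^ (p - 1) := by
    funext y
    have h : HasDerivAt g (-1 + p * y ^ (p - 1)) y := by
      rw [hgf]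
      simpa using (hasDerivAt_id y).fun_neg.fun_add
        (Real.hasDerivAt_rpow_const (x := y) (p := p) (Or.inr hp.le))
    exact h.deriv
  have hddg : ∀ y : ℝ, y ≠ 0 → deriv (deriv g) y = p * ((p - 1) * y ^ (p - 2)) := by
    intro y hy
    rw [hdg]
    have h : HasDerivAt (fun z : ℝ => -1 + p * z ^ (p - 1))
        (p * ((p - 1) * y ^ (p - 1 - 1))) y := by
      simpa using (hasDerivAt_const y (-1 : ℝ)).fun_add
        ((Real.hasDerivAt_rpow_const (x := y) (p := p - 1) (Or.inl hy)).const_mul p)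
    rw [show p - 1 - 1 = p - 2 by ring] at h
    exact h.deriv
  intro x hx
  have hA : x ^ (p - 1) = x ^ (p - 2) * x := by
    rw [show p - 1 = (p - 2) + 1 by ring, Real.rpow_add hx, Real.rpow_one]
  have hsign : 0 ≤ (x - 1) * (x ^ (p - 2) * x - 1) := by
    rw [← hA]
    rcases le_total x 1 with hx1 | hx1
    · have : x ^ (p - 1) ≤ 1 := Real.rpow_le_one hx.le hx1 (by linarith)
      nlinarith
    · have : (1 : ℝ) ≤ x ^ (p - 1) := Real.one_le_rpow hx1 (by linarith)
      nlinarith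
  have hB : 0 ≤ x ^ (p - 2) := Real.rpow_nonneg hx.le _
  rw [hΔ x, hddg x hx.ne', hddg 1 one_ne_zero, hdg]
  simp only [Real.one_rpow]
  rw [hA]
  nlinarith [mul_nonneg (mul_nonneg (by linarith : (0:ℝ) ≤ p) (by linarith : (0:ℝ) ≤ p - 1)) hsign,
    mul_nonneg (mul_nonneg (mul_nonneg (by linarith : (0:ℝ) ≤ p) (by linarith : (0:ℝ) ≤ p - 1))
      (by linarith : (0:ℝ) ≤ p - 1)) (mul_nonneg hB (sq_nonneg (x - 1)))]
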